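/- (Deterministic core of the restricted strong convexity lemma for the Lasso analog.) Let (w_i, y_i), i = 1,…,n, be data with w_i ∈ ℝ^p and y_i ∈ Y, and let f : ℝ × Y → ℝ be twice differentiable in its first argument with first derivative ∂f and second derivative ∂²f. Let L_w(β) = (1/n)Σ_{i=1}^n f(⟨w_i, β⟩, y_i) and S_w(β) = (1/n)Σ_{i=1}^n ∂f(⟨w_i, β⟩, y_i) w_i. Let β* ∈ ℝ^p with support s = {j : β*_j ≠ 0} of cardinality at most k (k ≥ 1), and let M₃, κ₁, κ₂ > 0. Assume: (i) ∂²f(⟨w_i, β* + h'⟩, y_i) ≥ M₃ for every i and every h' ∈ ℝ^p with ‖h'‖₁ ≤ 3‖β*‖₁; (ii) for every v ∈ ℝ^p, √((1/n)Σ_{i=1}^n ⟨w_i, v⟩²) ≥ κ₁‖v‖₂ − κ₂√(log p / n)‖v‖₁; (iii) n > 16(κ₂/κ₁)² k log p. Then for every h ∈ ℝ^p with ‖h_{s^c}‖₁ ≤ 3‖h_s‖₁ and ‖h‖₁ ≤ 3‖β*‖₁, L_w(β* + h) − L_w(β*) − ⟨S_w(β*), h⟩ ≥ τ_L‖h‖₂²,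 where τ_L = (M₃/2)(κ₁ − 4κ₂√(k log p / n))² > 0. -/

import Mathlib

set_option maxHeartbeats 1000000

lemma taylor_lb_aux (g g1 g2 : ℝ → ℝ) (hg : ∀ t, HasDerivAt g (g1 t) t)
    (hg1 : ∀ t, HasDerivAt g1 (g2 t) t) (K : ℝ)
    (hK : ∀ t ∈ Set.Icc (0:ℝ) 1, K ≤ g2 t) :
    g 0 + g1 0 + K / 2 ≤ g 1 := by
  set ψ1 : ℝ → ℝ := fun t => g1 t - g1 0 - K * t with hψ1
  have hdψ1 : ∀ t, HasDerivAt ψ1 (g2 t - K) t := fun t => by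
    have := ((hg1 t).sub_const (g1 0)).sub ((hasDerivAt_id t).const_mul K)
    simp only [mul_one] at this
    exact this
  have hmono1 : MonotoneOn ψ1 (Set.Icc 0 1) := by
    apply monotoneOn_of_deriv_nonneg (convex_Icc 0 1)
    · have hd : Differentiable ℝ ψ1 := fun t => (hdψ1 t).differentiableAt
      exact hd.continuous.continuousOn
    · exact fun t _ => (hdψ1 t).differentiableAt.differentiableWithinAt
    · intro t ht
      rw [interior_Icc] at ht
      rw [(hdψ1 t).deriv]
      have := hK t (Set.mem_Icc_of_Ioo ht)
      linarith
  have hψ1nonneg : ∀ t ∈ Set.Icc (0:ℝ) 1, 0 ≤ ψ1 t := by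
    intro t ht
    have := hmono1 (Set.left_mem_Icc.mpr zero_le_one) ht ht.1
    simpa [hψ1] using this
  set ψ : ℝ → ℝ := fun t => g t - g1 0 * t - K / 2 * t ^ 2 with hψ
  have hdψ : ∀ t, HasDerivAt ψ (ψ1 t) t := by
    intro t
    have h1 := ((hg t).sub ((hasDerivAt_id t).const_mul (g1 0))).sub
      ((hasDerivAt_pow 2 t).const_mul (K / 2))
    convert h1 using 1
    · rfl
    · rfl
    · rfl
    simp [hψ1]
    ring
  have hmono : MonotoneOn ψ (Set.Icc 0 1) := by
    apply monotoneOn_of_deriv_nonneg (convex_Icc 0 1)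
    · have hd : Differentiable ℝ ψ := fun t => (hdψ t).differentiableAt
      exact hd.continuous.continuousOn
    · exact fun t _ => (hdψ t).differentiableAt.differentiableWithinAt
    · intro t ht
      rw [interior_Icc] at ht
      rw [(hdψ t).deriv]
      exact hψ1nonneg t (Set.mem_Icc_of_Ioo ht)
  have := hmono (Set.left_mem_Icc.mpr zero_le_one) (Set.right_mem_Icc.mpr zero_le_one) zero_le_one
  simp [hψ] at this
  linarith

theorem rsc_from_restricted_eigenvalue_lasso_analog {Y : Type*} (n p k : ℕ)
    (hn : 0 < n) (hp : 0 < p) (hk : 1 ≤ k)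
    (w : Fin n → Fin p → ℝ) (y : Fin n → Y) (f df d2f : ℝ → Y → ℝ)
    (hderiv1 : ∀ (z : Y) (t : ℝ), HasDerivAt (fun u => f u z) (df t z) t)
    (hderiv2 : ∀ (z : Y) (t : ℝ), HasDerivAt (fun u => df u z) (d2f t z) t)
    (Lw : (Fin p → ℝ) → ℝ) (Sw : (Fin p → ℝ) → Fin p → ℝ)
    (hL : ∀ β, Lw β = (1 / n) * ∑ i, f (∑ j, w i j * β j) (y i))
    (hS : ∀ β j, Sw β j = (1 / n) * ∑ i, df (∑ j', w i j' * β j') (y i) * w i j)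
    (βstar : Fin p → ℝ) (M₃ κ₁ κ₂ : ℝ)
    (hM₃ : 0 < M₃) (hκ₁ : 0 < κ₁) (hκ₂ : 0 < κ₂)
    (hsupp : (Finset.univ.filter (fun j => βstar j ≠ 0)).card ≤ k)
    (hlb : ∀ (i : Fin n) (h' : Fin p → ℝ), (∑ j, |h' j|) ≤ 3 * ∑ j, |βstar j| →
      d2f (∑ j, w i j * (βstar j + h' j)) (y i) ≥ M₃)
    (hRE : ∀ v : Fin p → ℝ,
      Real.sqrt ((1 / n) * ∑ i, (∑ j, w i j * v j) ^ 2) ≥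
        κ₁ * Real.sqrt (∑ j, (v j) ^ 2) -
          κ₂ * Real.sqrt (Real.log p / n) * ∑ j, |v j|)
    (hlogp : 0 < Real.log p)
    (hsample : (n : ℝ) > 16 * (κ₂ / κ₁) ^ 2 * k * Real.log p) :
    0 < (M₃ / 2) * (κ₁ - 4 * κ₂ * Real.sqrt (k * Real.log p / n)) ^ 2 ∧
      ∀ h : Fin p → ℝ,
        (∑ j ∈ (Finset.univ.filter (fun j => βstar j ≠ 0))ᶜ, |h j| ≤
          3 * ∑ j ∈ Finset.univ.filter (fun j => βstar j ≠ 0), |h j|) →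
        (∑ j, |h j|) ≤ 3 * ∑ j, |βstar j| →
        Lw (βstar + h) - Lw βstar - (∑ j, Sw βstar j * h j) ≥
          (M₃ / 2) * (κ₁ - 4 * κ₂ * Real.sqrt (k * Real.log p / n)) ^ 2 *
            ∑ j, (h j) ^ 2 := by
  have hn' : (0:ℝ) < n := by exact_mod_cast hn
  have hk' : (1:ℝ) ≤ (k:ℝ) := by exact_mod_cast hk
  have hk0 : (0:ℝ) < (k:ℝ) := by linarith
  -- positivity of the constant
  have hr : (k:ℝ) * Real.log p / n < (κ₁ / (4 * κ₂)) ^ 2 := by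
    have h1 : 16 * (κ₂ / κ₁) ^ 2 * (k:ℝ) * Real.log p * κ₁ ^ 2 =
        16 * κ₂ ^ 2 * ((k:ℝ) * Real.log p) := by
      field_simp
    have h2 := mul_lt_mul_of_pos_right hsample (pow_pos hκ₁ 2)
    rw [h1] at h2
    rw [div_pow, div_lt_div_iff₀ hn' (by positivity)]
    nlinarith only [h2]
  have hsqlt : Real.sqrt ((k:ℝ) * Real.log p / n) < κ₁ / (4 * κ₂) :=
    (Real.sqrt_lt' (by positivity)).mpr hr
  have hc : 0 < κ₁ - 4 * κ₂ * Real.sqrt ((k:ℝ) * Real.log p / n) := by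
    have h4 : (0:ℝ) < 4 * κ₂ := by positivity
    have := (lt_div_iff₀' h4).mp hsqlt
    linarith
  set c : ℝ := κ₁ - 4 * κ₂ * Real.sqrt ((k:ℝ) * Real.log p / n) with hc_def
  refine ⟨mul_pos (by linarith : (0:ℝ) < M₃ / 2) (pow_pos hc 2), ?_⟩
  intro h hcone hl1
  set s : Finset (Fin p) := Finset.univ.filter (fun j => βstar j ≠ 0) with hs_def
  set E : ℝ := ∑ j, (h j) ^ 2 with hE_def
  have hE0 : 0 ≤ E := Finset.sum_nonneg fun j _ => sq_nonneg _
  obtain ⟨L1, hL1_def⟩ : ∃ x : ℝ, x = ∑ j, |h j| := ⟨_, rfl⟩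
  have hL10 : 0 ≤ L1 := hL1_def ▸ Finset.sum_nonneg fun j _ => abs_nonneg _
  -- ℓ1 / ℓ2 comparison on the cone
  have hCS : (∑ j ∈ s, |h j|) ^ 2 ≤ (k:ℝ) * E := by
    have h1 := Finset.sum_mul_sq_le_sq_mul_sq s (fun _ => (1:ℝ)) (fun j => |h j|)
    simp only [one_mul, one_pow, Finset.sum_const, nsmul_eq_mul, mul_one, sq_abs] at h1
    have h2 : (∑ j ∈ s, (h j) ^ 2) ≤ E := by
      rw [hE_def]
      apply Finset.sum_le_sum_of_subset_of_nonneg (Finset.subset_univ s)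
      intro j _ _; exact sq_nonneg _
    have h3 : (s.card : ℝ) ≤ (k:ℝ) := by exact_mod_cast hsupp
    nlinarith only [h1, h2, h3, hk0, hE0,
      Finset.sum_nonneg (fun j (_ : j ∈ s) => sq_nonneg (h j))]
  have hs1 : ∑ j ∈ s, |h j| ≤ Real.sqrt ((k:ℝ) * E) := by
    rw [Real.le_sqrt (Finset.sum_nonneg fun j _ => abs_nonneg _)
      (mul_nonneg hk0.le hE0)]
    exact hCS
  have hL1E : L1 ≤ 4 * (Real.sqrt (k:ℝ) * Real.sqrt E) := by
    have hsplit : Real.sqrt ((k:ℝ) * E) = Real.sqrt (k:ℝ) * Real.sqrt E :=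
      Real.sqrt_mul (le_of_lt hk0) _
    have hparts : L1 = (∑ j ∈ s, |h j|) + ∑ j ∈ sᶜ, |h j| := by
      rw [hL1_def]; exact (Finset.sum_add_sum_compl s _).symm
    rw [hparts]
    rw [hsplit] at hs1
    linarith only [hcone, hs1]
  -- restricted eigenvalue lower bound applied to h
  obtain ⟨Q, hQ_def⟩ : ∃ x : ℝ, x = (1 / (n:ℝ)) * ∑ i, (∑ j, w i j * h j) ^ 2 := ⟨_, rfl⟩
  have hQ0 : 0 ≤ Q := by
    rw [hQ_def]
    exact mul_nonneg (by positivity) (Finset.sum_nonneg fun i _ => sq_nonneg _)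
  have hcomb : Real.sqrt (Real.log p / n) * Real.sqrt (k:ℝ) =
      Real.sqrt ((k:ℝ) * Real.log p / n) := by
    rw [← Real.sqrt_mul (by positivity)]
    congr 1; ring
  have hsqQ : c * Real.sqrt E ≤ Real.sqrt Q := by
    have h1 := hRE h
    rw [← hQ_def, ← hE_def, ← hL1_def] at h1
    have h2 : κ₂ * Real.sqrt (Real.log p / n) * L1 ≤
        4 * κ₂ * Real.sqrt ((k:ℝ) * Real.log p / n) * Real.sqrt E := by
      have h3 : κ₂ * Real.sqrt (Real.log p / n) * L1 ≤
          κ₂ * Real.sqrt (Real.log p / n) * (4 * (Real.sqrt (k:ℝ) * Real.sqrt E)) :=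
        mul_le_mul_of_nonneg_left hL1E (by positivity)
      calc κ₂ * Real.sqrt (Real.log p / n) * L1
          ≤ κ₂ * Real.sqrt (Real.log p / n) * (4 * (Real.sqrt (k:ℝ) * Real.sqrt E)) := h3
        _ = 4 * κ₂ * (Real.sqrt (Real.log p / n) * Real.sqrt (k:ℝ)) * Real.sqrt E := by ring
        _ = 4 * κ₂ * Real.sqrt ((k:ℝ) * Real.log p / n) * Real.sqrt E := by rw [hcomb]
    have hexp : c * Real.sqrt E =
        κ₁ * Real.sqrt E - 4 * κ₂ * Real.sqrt ((k:ℝ) * Real.log p / n) * Real.sqrt E := by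
      rw [hc_def]; ring
    rw [hexp]
    linarith only [h1, h2]
  have hQE : c ^ 2 * E ≤ Q := by
    have h0 : 0 ≤ c * Real.sqrt E := mul_nonneg hc.le (Real.sqrt_nonneg _)
    have h2 : (c * Real.sqrt E) * (c * Real.sqrt E) ≤ Real.sqrt Q * Real.sqrt Q :=
      mul_le_mul hsqQ hsqQ h0 (Real.sqrt_nonneg _)
    nlinarith only [h2, Real.mul_self_sqrt hQ0, Real.mul_self_sqrt hE0]
  -- Taylor expansion setup
  obtain ⟨a, ha_def⟩ : ∃ x : Fin n → ℝ, x = fun i => ∑ j, w i j * βstar j := ⟨_, rfl⟩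
  obtain ⟨b, hb_def⟩ : ∃ x : Fin n → ℝ, x = fun i => ∑ j, w i j * h j := ⟨_, rfl⟩
  have ha' : ∀ i, a i = ∑ j, w i j * βstar j := fun i => by rw [ha_def]
  have hb' : ∀ i, b i = ∑ j, w i j * h j := fun i => by rw [hb_def]
  obtain ⟨g, hg_def⟩ : ∃ x : ℝ → ℝ,
    x = fun t => (1 / (n:ℝ)) * ∑ i, f (a i + t * b i) (y i) := ⟨_, rfl⟩
  obtain ⟨g1, hg1_def⟩ : ∃ x : ℝ → ℝ,
    x = fun t => (1 / (n:ℝ)) * ∑ i, df (a i + t * b i) (y i) * b i := ⟨_, rfl⟩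
  obtain ⟨g2, hg2_def⟩ : ∃ x : ℝ → ℝ,
    x = fun t => (1 / (n:ℝ)) * ∑ i, d2f (a i + t * b i) (y i) * b i * b i := ⟨_, rfl⟩
  have hg' : ∀ t, g t = (1 / (n:ℝ)) * ∑ i, f (a i + t * b i) (y i) := fun t => by rw [hg_def]
  have hg1' : ∀ t, g1 t = (1 / (n:ℝ)) * ∑ i, df (a i + t * b i) (y i) * b i :=
    fun t => by rw [hg1_def]
  have hg2' : ∀ t, g2 t = (1 / (n:ℝ)) * ∑ i, d2f (a i + t * b i) (y i) * b i * b i :=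
    fun t => by rw [hg2_def]
  have hg : ∀ t, HasDerivAt g (g1 t) t := by
    intro t
    rw [hg_def, hg1' t]
    have hterm : ∀ i ∈ Finset.univ, HasDerivAt (fun u => f (a i + u * b i) (y i))
        (df (a i + t * b i) (y i) * b i) t := by
      intro i _
      have hlin : HasDerivAt (fun u : ℝ => a i + u * b i) (b i) t := by
        simpa using ((hasDerivAt_id t).mul_const (b i)).const_add (a i)
      exact (hderiv1 (y i) (a i + t * b i)).comp t hlin
    exact (HasDerivAt.fun_sum hterm).const_mul (1 / (n:ℝ))
  have hg1 : ∀ t, HasDerivAt g1 (g2 t) t := by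
    intro t
    rw [hg1_def, hg2' t]
    have hterm : ∀ i ∈ Finset.univ, HasDerivAt (fun u => df (a i + u * b i) (y i) * b i)
        (d2f (a i + t * b i) (y i) * b i * b i) t := by
      intro i _
      have hlin : HasDerivAt (fun u : ℝ => a i + u * b i) (b i) t := by
        simpa using ((hasDerivAt_id t).mul_const (b i)).const_add (a i)
      exact ((hderiv2 (y i) (a i + t * b i)).comp t hlin).mul_const (b i)
    exact (HasDerivAt.fun_sum hterm).const_mul (1 / (n:ℝ))
  obtain ⟨K, hK_def⟩ : ∃ x : ℝ, x = M₃ * (c ^ 2 * E) := ⟨_, rfl⟩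
  have hargeq : ∀ (t : ℝ) (i : Fin n),
      (∑ j, w i j * (βstar j + t * h j)) = a i + t * b i := by
    intro t i
    rw [ha' i, hb' i]
    simp only [mul_add]
    rw [Finset.sum_add_distrib, Finset.mul_sum]
    congr 1
    apply Finset.sum_congr rfl
    intro j _
    ring
  have hK2 : ∀ t ∈ Set.Icc (0:ℝ) 1, K ≤ g2 t := by
    intro t ht
    have hd2 : ∀ i ∈ Finset.univ,
        M₃ * (b i * b i) ≤ d2f (a i + t * b i) (y i) * b i * b i := by
      intro i _
      have hball : (∑ j, |t * h j|) ≤ 3 * ∑ j, |βstar j| := by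
        have he : (∑ j, |t * h j|) = t * L1 := by
          rw [hL1_def, Finset.mul_sum]
          apply Finset.sum_congr rfl
          intro j _
          rw [abs_mul, abs_of_nonneg ht.1]
        rw [he]
        have h1 : t * L1 ≤ 1 * L1 := mul_le_mul_of_nonneg_right ht.2 hL10
        have hl1' : L1 ≤ 3 * ∑ j, |βstar j| := by rw [hL1_def]; exact hl1
        linarith only [h1, hl1']
      have hd := hlb i (fun j => t * h j) hball
      rw [hargeq t i] at hd
      nlinarith only [hd, mul_self_nonneg (b i)]
    have hsum := Finset.sum_le_sum hd2
    have hQb : Q = (1 / (n:ℝ)) * ∑ i, b i * b i := by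
      rw [hQ_def]
      congr 1
      apply Finset.sum_congr rfl
      intro i _
      rw [hb' i, sq]
    rw [hg2' t]
    have hstep : K ≤ (1 / (n:ℝ)) * ∑ i, M₃ * (b i * b i) := by
      rw [← Finset.mul_sum, hK_def]
      have he : (1 / (n:ℝ)) * (M₃ * ∑ i, b i * b i) =
          M₃ * ((1 / (n:ℝ)) * ∑ i, b i * b i) := by ring
      rw [he, ← hQb]
      exact mul_le_mul_of_nonneg_left hQE hM₃.le
    calc K ≤ (1 / (n:ℝ)) * ∑ i, M₃ * (b i * b i) := hstep
      _ ≤ (1 / (n:ℝ)) * ∑ i, d2f (a i + t * b i) (y i) * b i * b i :=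
        mul_le_mul_of_nonneg_left hsum (by positivity)
  have htaylor := taylor_lb_aux g g1 g2 hg hg1 K hK2
  -- identify endpoints
  have e0 : Lw βstar = g 0 := by
    rw [hL, hg' 0]
    congr 1
    apply Finset.sum_congr rfl
    intro i _
    rw [ha' i]
    norm_num
  have e1 : Lw (βstar + h) = g 1 := by
    rw [hL, hg' 1]
    congr 1
    apply Finset.sum_congr rfl
    intro i _
    congr 1
    have := hargeq 1 i
    simpa using this
  have e2 : (∑ j, Sw βstar j * h j) = g1 0 := by
    have estep : (∑ j, Sw βstar j * h j) =
        ∑ j, ∑ i, (1 / (n:ℝ)) * (df (∑ j', w i j' * βstar j') (y i) * w i j * h j) := by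
      apply Finset.sum_congr rfl
      intro j _
      rw [hS, Finset.mul_sum, Finset.sum_mul]
      apply Finset.sum_congr rfl
      intro i _
      ring
    rw [estep, Finset.sum_comm, hg1' 0, Finset.mul_sum]
    apply Finset.sum_congr rfl
    intro i _
    rw [ha' i, hb' i]
    simp only [zero_mul, mul_zero, Finset.sum_const_zero, add_zero, Finset.mul_sum]
    apply Finset.sum_congr rfl
    intro j _
    ring
  rw [e0, e1, e2]
  have hfin : (M₃ / 2) * c ^ 2 * E = K / 2 := by rw [hK_def]; ring
  rw [hE_def] at hfin
  rw [hfin]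
  linarith only [htaylor]
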